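/- For all nonnegative functions x, y ∈ L∞(D) on a measure space D with x - y ∈ L²(D) and y > 0 almost everywhere, the Kullback–Leibler divergence KL(x, y) = ∫_D (y ln(y/x) + x - y) dμ satisfies ‖x - y‖²_{L²(D)} ≤ 2 max(‖x‖_{L∞(D)}, ‖y‖_{L∞(D)}) · KL(x, y). -/

import Mathlib

open MeasureTheory ENNReal

/-- The pointwise integrand of the Kullback–Leibler divergence `KL(x,y)`, with the
convention that it is `+∞` when `x = 0 < y` (and `x` when `y = 0`). -/
noncomputable def klIntegrand {D : Type*} (x y : D → ℝ) (z : D) : ℝ≥0∞ :=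
  if x z = 0 ∧ y z ≠ 0 then ⊤
  else ENNReal.ofReal (y z * Real.log (y z / x z) + x z - y z)

/-- Estimate of the squared `L²`-distance by the Kullback–Leibler divergence
(Borwein–Lewis): `‖x-y‖²_{L²} ≤ 2 max(‖x‖_∞, ‖y‖_∞) KL(x,y)` for nonnegative
essentially bounded `x, y` with `x - y ∈ L²` and `y > 0` a.e. -/

lemma logA' {a b : ℝ} (hb : 0 < b) (hba : b ≤ a) :
    2*a*b*Real.log (a/b) ≤ a^2 - b^2 := by
  have ha : 0 < a := hb.trans_le hba
  have ht : (1:ℝ) ≤ a/b := (one_le_div hb).2 hba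
  have hlog : Real.log (a/b) ≤ (a/b - b/a)/2 := by
    have h1 : Real.log (a/b) ≤ Real.sinh (Real.log (a/b)) :=
      Real.self_le_sinh_iff.2 (Real.log_nonneg ht)
    have h2 : Real.sinh (Real.log (a/b)) = (a/b - (a/b)⁻¹)/2 :=
      Real.sinh_log (by positivity)
    rw [h2, inv_div] at h1
    exact h1
  calc 2*a*b*Real.log (a/b) ≤ 2*a*b*((a/b - b/a)/2) :=
        mul_le_mul_of_nonneg_left hlog (by positivity)
    _ = a^2 - b^2 := by field_simp

lemma logB {t : ℝ} (ht : 1 ≤ t) : 2*(t-1) ≤ (t+1)*Real.log t := by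
  set g : ℝ → ℝ := fun s => (s+1)*Real.log s - 2*(s-1) with hg
  have hd : ∀ s ∈ Set.Ioi (1:ℝ), HasDerivAt g (Real.log s + (s+1)*s⁻¹ - 2) s := by
    intro s hs
    have hs0 : (0:ℝ) < s := lt_trans one_pos hs
    have h1 : HasDerivAt (fun u : ℝ => (u+1)*Real.log u)
        (1 * Real.log s + (s+1) * s⁻¹) s :=
      ((hasDerivAt_id s).add_const 1).mul (Real.hasDerivAt_log hs0.ne')
    have h2 : HasDerivAt (fun u : ℝ => 2*(u-1)) 2 s := by
      simpa using ((hasDerivAt_id s).sub_const 1).const_mul 2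
    have h3 := h1.sub h2
    rw [one_mul] at h3
    exact h3
  have hmono : MonotoneOn g (Set.Ici 1) := by
    apply monotoneOn_of_deriv_nonneg (convex_Ici 1)
    · apply ContinuousOn.sub
      · exact (continuous_id.add continuous_const).continuousOn.mul
          (Real.continuousOn_log.mono (by intro s hs; simp at hs ⊢; linarith))
      · exact (continuous_const.mul (continuous_id.sub continuous_const)).continuousOn
    · rw [interior_Ici]
      exact fun s hs => (hd s hs).differentiableAt.differentiableWithinAt
    · rw [interior_Ici]
      intro s hs
      rw [(hd s hs).deriv]
      have hs1 : (1:ℝ) < s := hs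
      have hs0 : (0:ℝ) < s := lt_trans one_pos hs1
      have hlog : 1 - s⁻¹ ≤ Real.log s := by
        have := Real.log_le_sub_one_of_pos (inv_pos.2 hs0)
        rw [Real.log_inv] at this
        linarith
      have : (s+1)*s⁻¹ = 1 + s⁻¹ := by field_simp
      rw [this]; linarith
  have h1 : g 1 ≤ g t := hmono Set.self_mem_Ici ht ht
  simp only [hg, Real.log_one] at h1
  linarith

lemma logB' {a b : ℝ} (ha : 0 < a) (hab : a ≤ b) :
    2*(b-a) ≤ Real.log (b/a) * (b+a) := by
  have ht : (1:ℝ) ≤ b/a := (one_le_div ha).2 hab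
  have h := logB ht
  have h2 := mul_le_mul_of_nonneg_left h ha.le
  calc 2*(b-a) = a * (2*(b/a-1)) := by field_simp
    _ ≤ a * ((b/a+1)*Real.log (b/a)) := h2
    _ = Real.log (b/a) * (b+a) := by field_simp

lemma kl_pointwise {a b : ℝ} (ha : 0 < a) (hb : 0 < b) :
    (a - b)^2 ≤ 2 * max a b * (b * Real.log (b / a) + a - b) := by
  rcases le_total b a with hba | hab
  · rw [max_eq_left hba]
    have hlog : Real.log (b/a) = -Real.log (a/b) := by rw [← Real.log_inv, inv_div]
    have h := logA' hb hba
    rw [hlog]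
    nlinarith [h]
  · rw [max_eq_right hab]
    have h := logB' ha hab
    have h2 := mul_le_mul_of_nonneg_left h (by positivity : (0:ℝ) ≤ 2*b)
    nlinarith [h2, mul_nonneg (sq_nonneg (b-a)) (sub_nonneg.2 hab), hb.le, ha.le]

theorem l2_le_two_max_linf_mul_kl {D : Type*} [MeasurableSpace D] (μ : Measure D)
    (x y : D → ℝ) (hxm : Measurable x) (hym : Measurable y)
    (hx0 : ∀ᵐ z ∂μ, 0 ≤ x z) (hy0 : ∀ᵐ z ∂μ, 0 < y z)
    (hxb : MemLp x ⊤ μ) (hyb : MemLp y ⊤ μ) (hxy : MemLp (x - y) 2 μ) :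
    eLpNorm (x - y) 2 μ ^ 2
      ≤ 2 * max (eLpNorm x ⊤ μ) (eLpNorm y ⊤ μ) * ∫⁻ z, klIntegrand x y z ∂μ := by
  set M := max (eLpNorm x ⊤ μ) (eLpNorm y ⊤ μ) with hMdef
  have hxM : ∀ᵐ z ∂μ, ENNReal.ofReal (x z) ≤ M := by
    filter_upwards [ae_le_eLpNormEssSup (f := x) (μ := μ), hx0] with z hz h0
    calc ENNReal.ofReal (x z) = (‖x z‖₊ : ℝ≥0∞) := (Real.enorm_eq_ofReal h0).symm
      _ ≤ eLpNormEssSup x μ := hz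
      _ = eLpNorm x ⊤ μ := eLpNorm_exponent_top.symm
      _ ≤ M := le_max_left _ _
  have hyM : ∀ᵐ z ∂μ, ENNReal.ofReal (y z) ≤ M := by
    filter_upwards [ae_le_eLpNormEssSup (f := y) (μ := μ), hy0] with z hz h0
    calc ENNReal.ofReal (y z) = (‖y z‖₊ : ℝ≥0∞) := (Real.enorm_eq_ofReal h0.le).symm
      _ ≤ eLpNormEssSup y μ := hz
      _ = eLpNorm y ⊤ μ := eLpNorm_exponent_top.symm
      _ ≤ M := le_max_right _ _
  have hpt : ∀ᵐ z ∂μ, (‖x z - y z‖₊ : ℝ≥0∞) ^ 2 ≤ 2 * M * klIntegrand x y z := by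
    filter_upwards [hx0, hy0, hxM, hyM] with z h0x h0y hxm' hym'
    rcases eq_or_lt_of_le h0x with h | h
    · have hkl : klIntegrand x y z = ⊤ := by
        rw [klIntegrand, if_pos ⟨h.symm, h0y.ne'⟩]
      have hM0 : 0 < M := lt_of_lt_of_le (ENNReal.ofReal_pos.2 h0y) hym'
      rw [hkl, ENNReal.mul_top (mul_ne_zero two_ne_zero hM0.ne')]
      exact le_top
    · have hkl : klIntegrand x y z
          = ENNReal.ofReal (y z * Real.log (y z / x z) + x z - y z) := by
        rw [klIntegrand, if_neg (by push_neg; intro hx; exact absurd hx h.ne')]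
      have hkey := kl_pointwise h h0y
      have hmax : ENNReal.ofReal (max (x z) (y z)) ≤ M := by
        rcases le_total (x z) (y z) with hc | hc
        · rw [max_eq_right hc]; exact hym'
        · rw [max_eq_left hc]; exact hxm'
      calc (‖x z - y z‖₊ : ℝ≥0∞) ^ 2
          = ENNReal.ofReal ((x z - y z)^2) := by
            rw [← enorm_eq_nnnorm, ← ofReal_norm, ← ENNReal.ofReal_pow (norm_nonneg _),
              Real.norm_eq_abs, sq_abs]
        _ ≤ ENNReal.ofReal (2 * max (x z) (y z)
              * (y z * Real.log (y z / x z) + x z - y z)) := by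
            apply ENNReal.ofReal_le_ofReal
            calc (x z - y z)^2
                ≤ 2 * max (x z) (y z) * (y z * Real.log (y z / x z) + x z - y z) := hkey
              _ = 2 * max (x z) (y z) * (y z * Real.log (y z / x z) + x z - y z) := rfl
        _ = ENNReal.ofReal (2 * max (x z) (y z))
              * ENNReal.ofReal (y z * Real.log (y z / x z) + x z - y z) := by
            rw [mul_sub, mul_add, ← ENNReal.ofReal_mul (by positivity)]
            ring_nf
        _ ≤ 2 * M * klIntegrand x y z := by
            rw [hkl, ENNReal.ofReal_mul (by norm_num : (0:ℝ) ≤ 2), ENNReal.ofReal_ofNat]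
            exact mul_le_mul_left (mul_le_mul_right hmax 2) _
  have h2 : eLpNorm (x - y) 2 μ ^ 2 = ∫⁻ z, (‖x z - y z‖₊ : ℝ≥0∞) ^ 2 ∂μ := by
    rw [eLpNorm_eq_lintegral_rpow_enorm_toReal two_ne_zero ENNReal.ofNat_ne_top]
    have : ((2:ℝ≥0∞)).toReal = (2:ℝ) := by simp
    rw [this, ← ENNReal.rpow_natCast _ 2, ← ENNReal.rpow_mul]
    norm_num
    rfl
  calc eLpNorm (x - y) 2 μ ^ 2 = ∫⁻ z, (‖x z - y z‖₊ : ℝ≥0∞) ^ 2 ∂μ := h2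
    _ ≤ ∫⁻ z, 2 * M * klIntegrand x y z ∂μ := lintegral_mono_ae hpt
    _ = 2 * M * ∫⁻ z, klIntegrand x y z ∂μ :=
        lintegral_const_mul' _ _
          (ENNReal.mul_ne_top ENNReal.ofNat_ne_top
            (max_lt hxb.eLpNorm_lt_top hyb.eLpNorm_lt_top).ne)
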